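/- arXiv:2504.18208 — 4 statements merged into one kernel-verified Lean document; each statement's English description precedes it below -/
import Mathlib

section
/- Let Ω be a compact metric space, let ν be a nonzero finite signed Borel measure on Ω with total variation norm ‖ν‖_TV, and let r > 1. Then ‖ν‖_TV^r = inf over Borel probability measures μ on Ω with ν ≪ μ of ∫_Ω |dν/dμ|^r dμ, and the infimum is attained at μ = |ν| / ‖ν‖_TV, where |ν| is the total variation measure of ν. -/
open MeasureTheory Filter Topology
open scoped ENNReal

lemma ofReal_add_ofReal_neg (a : ℝ) :
    ENNReal.ofReal a + ENNReal.ofReal (-a) = ENNReal.ofReal |a| := by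
  rcases le_total 0 a with h | h
  · rw [ENNReal.ofReal_of_nonpos (p := -a) (by linarith), add_zero, abs_of_nonneg h]
  · rw [ENNReal.ofReal_of_nonpos (p := a) h, zero_add, abs_of_nonpos h]

lemma tv_withDensity {Ω : Type*} [MeasurableSpace Ω] (μ : Measure Ω) [IsFiniteMeasure μ]
    {g : Ω → ℝ} (hgm : Measurable g) (hgi : Integrable g μ) :
    SignedMeasure.totalVariation (μ.withDensityᵥ g) Set.univ = ∫⁻ ω, ENNReal.ofReal |g ω| ∂μ := by
  have h := SignedMeasure.toJordanDecomposition_eq_of_eq_add_withDensity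
    (t := 0) (s := μ.withDensityᵥ g) hgm hgi
    (VectorMeasure.MutuallySingular.zero_left) (zero_add _).symm
  simp only [SignedMeasure.totalVariation, h]
  simp only [SignedMeasure.toJordanDecomposition_zero, JordanDecomposition.zero_posPart,
    JordanDecomposition.zero_negPart, zero_add]
  rw [Measure.add_apply,
    withDensity_apply _ MeasurableSet.univ, withDensity_apply _ MeasurableSet.univ,
    Measure.restrict_univ, ← lintegral_add_left (by measurability)]
  exact lintegral_congr fun ω => ofReal_add_ofReal_neg (g ω)

/-- Variational representation of the total variation norm:
`‖ν‖_TV^r = inf { ∫ |dν/dμ|^r dμ : μ ∈ P(Ω), ν ≪ μ }`, attained at `μ = |ν|/‖ν‖_TV`. -/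
theorem stmt_6
    {Ω : Type*} [MetricSpace Ω] [CompactSpace Ω] [MeasurableSpace Ω] [BorelSpace Ω]
    (ν : SignedMeasure Ω) (hν : ν ≠ 0)
    (r : ℝ) (hr : 1 < r)
    (tv : ℝ) (htv : tv = (ν.totalVariation Set.univ).toReal) :
    -- lower bound: for every μ ∈ P(Ω) and every density g of ν w.r.t. μ
    (∀ μ : Measure Ω, IsProbabilityMeasure μ →
      ∀ g : Ω → ℝ, Integrable g μ → μ.withDensityᵥ g = ν →
        ENNReal.ofReal (tv ^ r) ≤ ∫⁻ ω, ENNReal.ofReal (|g ω| ^ r) ∂μ)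
    ∧
    -- attainment at μ = |ν| / ‖ν‖_TV
    (IsProbabilityMeasure ((ENNReal.ofReal tv)⁻¹ • ν.totalVariation) ∧
      ∃ g : Ω → ℝ,
        Integrable g ((ENNReal.ofReal tv)⁻¹ • ν.totalVariation) ∧
        ((ENNReal.ofReal tv)⁻¹ • ν.totalVariation).withDensityᵥ g = ν ∧
        (∫⁻ ω, ENNReal.ofReal (|g ω| ^ r) ∂((ENNReal.ofReal tv)⁻¹ • ν.totalVariation))
          = ENNReal.ofReal (tv ^ r)) := by
  haveI : IsFiniteMeasure ν.totalVariation := by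
    rw [SignedMeasure.totalVariation]; infer_instance
  have hfin : ν.totalVariation Set.univ ≠ ⊤ := measure_ne_top _ _
  have hTne : ν.totalVariation Set.univ ≠ 0 := by
    intro h0
    apply hν
    ext i hi
    simp only [VectorMeasure.zero_apply]
    exact ν.null_of_totalVariation_zero (measure_mono_null (Set.subset_univ i) h0)
  have htv0 : 0 < tv := htv ▸ ENNReal.toReal_pos hTne hfin
  have hofReal : ENNReal.ofReal tv = ν.totalVariation Set.univ := by
    rw [htv, ENNReal.ofReal_toReal hfin]
  have hr0 : (0:ℝ) < r := lt_trans one_pos hr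
  have hrne : r ≠ 0 := hr0.ne'
  constructor
  · intro μ hμ g hgi hgd
    obtain ⟨g', hg'm, hgg'⟩ : ∃ g' : Ω → ℝ, Measurable g' ∧ g =ᵐ[μ] g' :=
      ⟨hgi.1.mk g, hgi.1.stronglyMeasurable_mk.measurable, hgi.1.ae_eq_mk⟩
    have hgi' : Integrable g' μ := hgi.congr hgg'
    have hgd' : μ.withDensityᵥ g' = ν := by
      rw [← hgd]; exact (MeasureTheory.WithDensityᵥEq.congr_ae hgg'.symm)
    have key : ENNReal.ofReal tv = ∫⁻ ω, ENNReal.ofReal |g' ω| ∂μ := by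
      rw [hofReal, ← hgd']; exact tv_withDensity μ hg'm hgi'
    set f : Ω → ℝ≥0∞ := fun ω => ENNReal.ofReal |g' ω| with hf
    have hfm : AEMeasurable f μ := (ENNReal.measurable_ofReal.comp hg'm.abs).aemeasurable
    have hq : Real.HolderConjugate r (Real.conjExponent r) := Real.HolderConjugate.conjExponent hr
    have h1 : ∫⁻ ω, f ω ∂μ ≤ (∫⁻ ω, f ω ^ r ∂μ) ^ (1/r) := by
      have h := ENNReal.lintegral_mul_le_Lp_mul_Lq μ hq hfm
        (g := fun _ => (1:ℝ≥0∞)) aemeasurable_const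
      simpa [lintegral_const, measure_univ] using h
    have h2 : (ENNReal.ofReal tv) ^ r ≤ ∫⁻ ω, f ω ^ r ∂μ := by
      calc (ENNReal.ofReal tv) ^ r = (∫⁻ ω, f ω ∂μ) ^ r := by rw [key]
        _ ≤ ((∫⁻ ω, f ω ^ r ∂μ) ^ (1/r)) ^ r := ENNReal.rpow_le_rpow h1 hr0.le
        _ = ∫⁻ ω, f ω ^ r ∂μ := by
          rw [← ENNReal.rpow_mul, one_div, inv_mul_cancel₀ hrne, ENNReal.rpow_one]
    calc ENNReal.ofReal (tv ^ r) = (ENNReal.ofReal tv) ^ r :=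
          (ENNReal.ofReal_rpow_of_nonneg htv0.le hr0.le).symm
      _ ≤ ∫⁻ ω, f ω ^ r ∂μ := h2
      _ = ∫⁻ ω, ENNReal.ofReal (|g' ω| ^ r) ∂μ := by
          refine lintegral_congr fun ω => ?_
          rw [hf, ENNReal.ofReal_rpow_of_nonneg (abs_nonneg _) hr0.le]
      _ = ∫⁻ ω, ENNReal.ofReal (|g ω| ^ r) ∂μ := by
          refine lintegral_congr_ae ?_
          filter_upwards [hgg'] with ω hω
          rw [hω]
  · classical
    have hprob : IsProbabilityMeasure ((ENNReal.ofReal tv)⁻¹ • ν.totalVariation) := by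
      constructor
      rw [Measure.smul_apply, smul_eq_mul, hofReal, ENNReal.inv_mul_cancel hTne hfin]
    refine ⟨hprob, ?_⟩
    obtain ⟨S, hSm, hS1, hS2⟩ := ν.toJordanDecomposition.mutuallySingular
    set g : Ω → ℝ := fun ω => if ω ∈ S then -tv else tv with hg
    have habs : ∀ ω, |g ω| = tv := by
      intro ω
      by_cases h : ω ∈ S <;> simp [hg, h, abs_of_pos htv0, abs_of_neg (neg_neg_iff_pos.2 htv0)]
    have hgm : Measurable g := Measurable.ite hSm measurable_const measurable_const
    have hgi : Integrable g ((ENNReal.ofReal tv)⁻¹ • ν.totalVariation) := by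
      refine Integrable.mono' (integrable_const tv) hgm.aestronglyMeasurable ?_
      exact ae_of_all _ fun ω => by rw [Real.norm_eq_abs, habs]
    have hinv : ((ENNReal.ofReal tv)⁻¹).toReal = tv⁻¹ := by
      rw [ENNReal.toReal_inv, ENNReal.toReal_ofReal htv0.le]
    refine ⟨g, hgi, ?_, ?_⟩
    · ext i hi
      rw [MeasureTheory.withDensityᵥ_apply hgi hi, Measure.restrict_smul, integral_smul_measure]
      have hTr : ν.totalVariation.restrict i =
          ν.toJordanDecomposition.posPart.restrict i +
            ν.toJordanDecomposition.negPart.restrict i := by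
        rw [SignedMeasure.totalVariation, Measure.restrict_add]
      have hboundp : Integrable g (ν.toJordanDecomposition.posPart.restrict i) := by
        refine Integrable.mono' (integrable_const tv) hgm.aestronglyMeasurable ?_
        exact ae_of_all _ fun ω => by rw [Real.norm_eq_abs, habs]
      have hboundn : Integrable g (ν.toJordanDecomposition.negPart.restrict i) := by
        refine Integrable.mono' (integrable_const tv) hgm.aestronglyMeasurable ?_
        exact ae_of_all _ fun ω => by rw [Real.norm_eq_abs, habs]
      have hpint : ∫ x in i, g x ∂ν.toJordanDecomposition.posPart
          = (ν.toJordanDecomposition.posPart i).toReal * tv := by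
        have hae : g =ᵐ[ν.toJordanDecomposition.posPart.restrict i] fun _ => tv := by
          refine ae_restrict_of_ae ?_
          filter_upwards [(compl_mem_ae_iff).2 hS1] with ω hω
          simp only [hg]
          exact if_neg hω
        rw [integral_congr_ae hae, integral_const, measureReal_restrict_apply_univ, smul_eq_mul, measureReal_def]
      have hnint : ∫ x in i, g x ∂ν.toJordanDecomposition.negPart
          = (ν.toJordanDecomposition.negPart i).toReal * (-tv) := by
        have hae : g =ᵐ[ν.toJordanDecomposition.negPart.restrict i] fun _ => -tv := by
          refine ae_restrict_of_ae ?_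
          have h2 : ∀ᵐ ω ∂ν.toJordanDecomposition.negPart, ω ∈ Sᶜᶜ :=
            (compl_mem_ae_iff).2 hS2
          filter_upwards [h2] with ω hω
          rw [compl_compl] at hω
          simp [hg, hω]
        rw [integral_congr_ae hae, integral_const, measureReal_restrict_apply_univ, smul_eq_mul, measureReal_def]
      have hν_apply : ν i = (ν.toJordanDecomposition.posPart i).toReal
          - (ν.toJordanDecomposition.negPart i).toReal := by
        conv_lhs => rw [← ν.toSignedMeasure_toJordanDecomposition]
        rw [JordanDecomposition.toSignedMeasure, VectorMeasure.sub_apply,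
          Measure.toSignedMeasure_apply_measurable hi,
          Measure.toSignedMeasure_apply_measurable hi, measureReal_def, measureReal_def]
      rw [hTr, integral_add_measure hboundp hboundn, hpint, hnint, hinv, hν_apply]
      have : tv⁻¹ • ((ν.toJordanDecomposition.posPart i).toReal * tv +
          (ν.toJordanDecomposition.negPart i).toReal * (-tv))
          = (ν.toJordanDecomposition.posPart i).toReal
            - (ν.toJordanDecomposition.negPart i).toReal := by
        field_simp
        rw [smul_eq_mul, one_div, inv_mul_eq_div, div_eq_iff htv0.ne']
        ring
      exact this
    · have : ∀ ω, ENNReal.ofReal (|g ω| ^ r) = ENNReal.ofReal (tv ^ r) := fun ω => by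
        rw [habs]
      simp_rw [this]
      rw [lintegral_const, measure_univ, mul_one]
end

section
/- Under the teacher–student assumption (TS) and assumption (A) on f, for every Borel probability measure μ on Ω one has L^0_f(μ) = D_f(ν̄|μ), that is: L^0_f(μ) = ∫_Ω f(dν̄/dμ) dμ if ν̄ ≪ μ, and L^0_f(μ) = +∞ otherwise. -/
open MeasureTheory Filter Topology
open scoped ENNReal

/-- The divergence `D_f(ν|μ)` (infimum over integrable densities of `ν` w.r.t. `μ`;
`+∞` when `ν` is not absolutely continuous w.r.t. `μ`). -/
noncomputable def Df {Ω : Type*} [MeasurableSpace Ω] (f : ℝ → ℝ)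
    (ν : MeasureTheory.SignedMeasure Ω) (μ : MeasureTheory.Measure Ω) : ℝ≥0∞ :=
  ⨅ (g : Ω → ℝ) (_ : MeasureTheory.Integrable g μ ∧ μ.withDensityᵥ g = ν),
    ∫⁻ ω, ENNReal.ofReal (f (g ω)) ∂μ

/-- The operator `Φ⋆ : M(Ω) → L²(ρ)`. -/
noncomputable def phiStar {Ω : Type*} [MeasurableSpace Ω] {d : ℕ}
    (φ : Ω → EuclideanSpace ℝ (Fin d) → ℝ) (ν : MeasureTheory.SignedMeasure Ω)
    (x : EuclideanSpace ℝ (Fin d)) : ℝ :=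
  (∫ ω, φ ω x ∂ν.toJordanDecomposition.posPart)
    - ∫ ω, φ ω x ∂ν.toJordanDecomposition.negPart

lemma jd_integral {Ω : Type*} [MeasurableSpace Ω] {μ : Measure Ω} [IsFiniteMeasure μ]
    {u : Ω → ℝ} (hum : Measurable u) (hu : Integrable u μ)
    {g : Ω → ℝ} (hgm : Measurable g) (hgb : ∃ C, ∀ ω, ‖g ω‖ ≤ C) :
    (∫ ω, g ω ∂(SignedMeasure.toJordanDecomposition (μ.withDensityᵥ u)).posPart)
      - ∫ ω, g ω ∂(SignedMeasure.toJordanDecomposition (μ.withDensityᵥ u)).negPart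
      = ∫ ω, g ω * u ω ∂μ := by
  have hJ := MeasureTheory.SignedMeasure.toJordanDecomposition_eq_of_eq_add_withDensity
    (t := (0 : SignedMeasure Ω)) (s := μ.withDensityᵥ u) hum hu
    VectorMeasure.MutuallySingular.zero_left (by rw [zero_add])
  rw [hJ]
  simp only [MeasureTheory.SignedMeasure.toJordanDecomposition_zero,
    MeasureTheory.JordanDecomposition.zero_posPart,
    MeasureTheory.JordanDecomposition.zero_negPart, zero_add]
  have h1 : (μ.withDensity fun ω => ENNReal.ofReal (u ω))
      = μ.withDensity fun ω => (Real.toNNReal (u ω) : ℝ≥0∞) := rfl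
  have h2 : (μ.withDensity fun ω => ENNReal.ofReal (-u ω))
      = μ.withDensity fun ω => (Real.toNNReal (-u ω) : ℝ≥0∞) := rfl
  rw [h1, h2, integral_withDensity_eq_integral_smul hum.real_toNNReal g,
    integral_withDensity_eq_integral_smul (f := fun ω => Real.toNNReal (-u ω)) hum.neg.real_toNNReal g]
  have e1 : (fun ω => Real.toNNReal (u ω) • g ω) = fun ω => max (u ω) 0 * g ω := by
    funext ω; simp [NNReal.smul_def, Real.coe_toNNReal']
  have e2 : (fun ω => Real.toNNReal (-u ω) • g ω) = fun ω => max (-u ω) 0 * g ω := by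
    funext ω; simp [NNReal.smul_def, Real.coe_toNNReal']
  have i1 : Integrable (fun ω => max (u ω) 0 * g ω) μ := by
    have := (hu.pos_part.bdd_mul hgm.aestronglyMeasurable (ae_of_all _ hgb.choose_spec))
    exact this.congr (by filter_upwards with ω using mul_comm _ _)
  have i2 : Integrable (fun ω => max (-u ω) 0 * g ω) μ := by
    have := (hu.neg.pos_part.bdd_mul hgm.aestronglyMeasurable (ae_of_all _ hgb.choose_spec))
    exact this.congr (by filter_upwards with ω using mul_comm _ _)
  rw [e1, e2, ← integral_sub i1 i2]
  congr 1; funext ω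
  rw [← sub_mul, max_zero_sub_max_neg_zero_eq_self, mul_comm]

/-- Under (TS) and (A), `L⁰_f(μ) = D_f(ν̄|μ)` for every
probability measure `μ` on `Ω`. -/
theorem stmt_10
    {Ω : Type*} [MetricSpace Ω] [CompactSpace Ω] [MeasurableSpace Ω] [BorelSpace Ω]
    {d : ℕ}
    (μ : Measure Ω) [IsProbabilityMeasure μ]
    (ρ : Measure (EuclideanSpace ℝ (Fin d))) [IsProbabilityMeasure ρ]
    (Y : EuclideanSpace ℝ (Fin d) → ℝ) (hY : MemLp Y 2 ρ)
    (φ : Ω → EuclideanSpace ℝ (Fin d) → ℝ)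
    (hφ_meas : Measurable (Function.uncurry φ))
    (hφ_cont : ∀ᵐ x ∂ρ, Continuous fun ω => φ ω x)
    (hφ_int : Integrable (fun x => (⨆ ω, |φ ω x|) ^ 2) ρ)
    (f : ℝ → ℝ)
    (hf_nonneg : ∀ t, 0 ≤ f t)
    (hf_conv : StrictConvexOn ℝ Set.univ f)
    (hf_super : Tendsto (fun t : ℝ => f t / |t|) (cocompact ℝ) atTop)
    -- teacher–student assumption (TS)
    (νbar : SignedMeasure Ω)
    (hTS : phiStar φ νbar =ᵐ[ρ] Y)
    (hinj : ∀ ν₁ ν₂ : SignedMeasure Ω,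
      phiStar φ ν₁ =ᵐ[ρ] phiStar φ ν₂ → ν₁ = ν₂) :
    (⨅ (u : Ω → ℝ)
        (_ : Integrable u μ ∧ (fun x => ∫ ω, φ ω x * u ω ∂μ) =ᵐ[ρ] Y),
        ∫⁻ ω, ENNReal.ofReal (f (u ω)) ∂μ)
      = Df f νbar μ := by
  have keyAE : ∀ u : Ω → ℝ, Integrable u μ →
      phiStar φ (μ.withDensityᵥ u) =ᵐ[ρ] fun x => ∫ ω, φ ω x * u ω ∂μ := by
    intro u hu
    have hmeq : μ.withDensityᵥ u = μ.withDensityᵥ (hu.1.mk u) :=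
      MeasureTheory.WithDensityᵥEq.congr_ae hu.1.ae_eq_mk
    have hu'int : Integrable (hu.1.mk u) μ := hu.congr hu.1.ae_eq_mk
    filter_upwards [hφ_cont] with x hx
    have hgm : Measurable fun ω => φ ω x := hx.measurable
    have hgb : ∃ C, ∀ ω, ‖φ ω x‖ ≤ C := by
      rcases isEmpty_or_nonempty Ω with h | h
      · exact ⟨0, fun ω => (IsEmpty.false ω).elim⟩
      · obtain ⟨ω0, -, hω0⟩ := isCompact_univ.exists_isMaxOn Set.univ_nonempty
          hx.norm.continuousOn
        exact ⟨‖φ ω0 x‖, fun ω => hω0 (Set.mem_univ ω)⟩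
    have h1 : phiStar φ (μ.withDensityᵥ u) x = ∫ ω, φ ω x * (hu.1.mk u) ω ∂μ := by
      rw [phiStar, hmeq]
      exact jd_integral hu.1.measurable_mk hu'int hgm hgb
    rw [h1]
    exact integral_congr_ae (hu.1.ae_eq_mk.mono fun ω hω => by rw [hω]) |>.symm
  have hiff : ∀ u : Ω → ℝ,
      (Integrable u μ ∧ (fun x => ∫ ω, φ ω x * u ω ∂μ) =ᵐ[ρ] Y) ↔
      (Integrable u μ ∧ μ.withDensityᵥ u = νbar) := by
    intro u
    constructor
    · rintro ⟨hu, h2⟩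
      exact ⟨hu, hinj _ _ (((keyAE u hu).trans h2).trans hTS.symm)⟩
    · rintro ⟨hu, h2⟩
      refine ⟨hu, ?_⟩
      have h3 := keyAE u hu
      rw [h2] at h3
      exact h3.symm.trans hTS
  rw [Df]
  exact iInf_congr fun u => iInf_congr_Prop (hiff u) fun _ => rfl
end

section
/- Assume f satisfies (A) and φ has the stated integrability, and let λ > 0 and μ be a Borel probability measure on Ω. Then the unique maximizer α^λ_f[μ] of α ↦ −∫_Ω f*(Φ^⊤α) dμ + ⟨α, Y⟩_{L²(ρ)} − (λ/2)‖α‖²_{L²(ρ)} over L²(ρ) satisfies ‖α^λ_f[μ]‖_{L²(ρ)} ≤ λ^{-1} (‖Y‖²_{L²(ρ)} + 2λ f(0))^{1/2}. -/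
open MeasureTheory Filter Topology
open scoped ENNReal

/-- Norm bound for the dual maximizer:
`‖α^λ_f[μ]‖_{L²(ρ)} ≤ λ⁻¹ (‖Y‖²_{L²(ρ)} + 2λ f(0))^{1/2}`. -/
theorem stmt_11
    {Ω : Type*} [MetricSpace Ω] [CompactSpace Ω] [MeasurableSpace Ω] [BorelSpace Ω]
    {d : ℕ}
    (μ : Measure Ω) [IsProbabilityMeasure μ]
    (ρ : Measure (EuclideanSpace ℝ (Fin d))) [IsProbabilityMeasure ρ]
    (Y : EuclideanSpace ℝ (Fin d) → ℝ) (hY : MemLp Y 2 ρ)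
    (φ : Ω → EuclideanSpace ℝ (Fin d) → ℝ)
    (hφ_meas : Measurable (Function.uncurry φ))
    (hφ_cont : ∀ᵐ x ∂ρ, Continuous fun ω => φ ω x)
    (hφ_int : Integrable (fun x => (⨆ ω, |φ ω x|) ^ 2) ρ)
    (f : ℝ → ℝ)
    (hf_nonneg : ∀ t, 0 ≤ f t)
    (hf_conv : StrictConvexOn ℝ Set.univ f)
    (hf_super : Tendsto (fun t : ℝ => f t / |t|) (cocompact ℝ) atTop)
    (fs : ℝ → ℝ) (hfs : ∀ s, fs s = ⨆ t : ℝ, (s * t - f t))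
    (lam : ℝ) (hlam : 0 < lam)
    -- the adjoint operator Φ^⊤
    (T : (EuclideanSpace ℝ (Fin d) → ℝ) → Ω → ℝ)
    (hT : ∀ α ω, T α ω = ∫ x, φ ω x * α x ∂ρ)
    -- the dual objective
    (D : (EuclideanSpace ℝ (Fin d) → ℝ) → ℝ)
    (hD : ∀ α, D α = -(∫ ω, fs (T α ω) ∂μ) + (∫ x, α x * Y x ∂ρ)
        - lam / 2 * ∫ x, (α x) ^ 2 ∂ρ)
    -- α₀ is the (unique) dual maximizer
    (α₀ : EuclideanSpace ℝ (Fin d) → ℝ)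
    (hα₀ : MemLp α₀ 2 ρ)
    (hmax : ∀ α, MemLp α 2 ρ → D α ≤ D α₀) :
    Real.sqrt (∫ x, (α₀ x) ^ 2 ∂ρ)
      ≤ lam⁻¹ * Real.sqrt ((∫ x, (Y x) ^ 2 ∂ρ) + 2 * lam * f 0) := by
  classical
  -- Ω is nonempty
  have hΩ : Nonempty Ω := by
    by_contra h
    rw [not_nonempty_iff] at h
    have h1 : μ Set.univ = 1 := measure_univ
    rw [Set.univ_eq_empty_iff.mpr h] at h1
    simp at h1
  -- boundedness of the sup defining fs
  have hbdd : ∀ s : ℝ, BddAbove (Set.range fun t => s * t - f t) := by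
    intro s
    have h1 : ∀ᶠ t in cocompact ℝ, |s| + 1 ≤ f t / |t| :=
      hf_super.eventually_ge_atTop (|s| + 1)
    rw [Filter.eventually_iff, Filter.mem_cocompact] at h1
    obtain ⟨K, hK, hKs⟩ := h1
    obtain ⟨R, hR⟩ := hK.isBounded.subset_closedBall 0
    refine ⟨|s| * max R 0, ?_⟩
    rintro y ⟨t, rfl⟩
    by_cases ht : t ∈ K
    · have h2 : |t| ≤ max R 0 := by
        have := hR ht
        rw [Metric.mem_closedBall, Real.dist_eq, sub_zero] at this
        exact le_trans this (le_max_left _ _)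
      have h3 : s * t ≤ |s| * |t| := by
        calc s * t ≤ |s * t| := le_abs_self _
          _ = |s| * |t| := abs_mul s t
      show s * t - f t ≤ |s| * max R 0
      linarith [hf_nonneg t, mul_le_mul_of_nonneg_left h2 (abs_nonneg s)]
    · have h4 : |s| + 1 ≤ f t / |t| := hKs ht
      by_cases ht0 : t = 0
      · subst ht0
        simp at h4
        linarith [abs_nonneg s]
      · have habs : 0 < |t| := abs_pos.mpr ht0
        have h5 : (|s| + 1) * |t| ≤ f t := (le_div_iff₀ habs).mp h4
        have h3 : s * t ≤ |s| * |t| := by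
          calc s * t ≤ |s * t| := le_abs_self _
            _ = |s| * |t| := abs_mul s t
        show s * t - f t ≤ |s| * max R 0
        nlinarith [abs_nonneg t, mul_nonneg (abs_nonneg s) (le_max_right R 0)]
  -- basic facts about fs
  have hfs_ub : ∀ s t : ℝ, s * t - f t ≤ fs s := fun s t => by
    rw [hfs s]; exact le_ciSup (hbdd s) t
  have hfs_lb : ∀ s, -f 0 ≤ fs s := fun s => by
    have := hfs_ub s 0
    simpa using this
  have hfs0 : fs 0 ≤ 0 := by
    rw [hfs 0]
    exact ciSup_le fun t => by simpa using hf_nonneg t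
  have hfs_comb : ∀ (u c : ℝ), 0 ≤ c → c ≤ 1 → fs (c * u) ≤ (1 - c) * fs 0 + c * fs u := by
    intro u c hc0 hc1
    rw [hfs (c * u)]
    apply ciSup_le
    intro t
    show c * u * t - f t ≤ (1 - c) * fs 0 + c * fs u
    have e : c * u * t - f t = (1 - c) * (0 * t - f t) + c * (u * t - f t) := by ring
    rw [e]
    exact add_le_add (mul_le_mul_of_nonneg_left (hfs_ub 0 t) (by linarith))
      (mul_le_mul_of_nonneg_left (hfs_ub u t) hc0)
  -- convexity and continuity of fs
  have hfs_convex : ConvexOn ℝ Set.univ fs := by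
    refine ⟨convex_univ, ?_⟩
    intro x _ y _ a b ha hb hab
    simp only [smul_eq_mul]
    rw [hfs (a * x + b * y)]
    apply ciSup_le
    intro t
    show (a * x + b * y) * t - f t ≤ a * fs x + b * fs y
    have e : (a * x + b * y) * t - f t = a * (x * t - f t) + b * (y * t - f t) := by
      linear_combination (f t) * hab
    rw [e]
    exact add_le_add (mul_le_mul_of_nonneg_left (hfs_ub x t) ha)
      (mul_le_mul_of_nonneg_left (hfs_ub y t) hb)
  have hfs_cont : Continuous fs := by
    rw [← continuousOn_univ]
    exact hfs_convex.continuousOn isOpen_univ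
  -- the sup of |φ|
  set g : EuclideanSpace ℝ (Fin d) → ℝ := fun x => ⨆ ω, |φ ω x| with hg_def
  have hg_nonneg : ∀ x, 0 ≤ g x := fun x => Real.iSup_nonneg fun ω => abs_nonneg _
  have hg_aesm : AEStronglyMeasurable g ρ := by
    have h := hφ_int.aestronglyMeasurable
    have heq : g = fun x => Real.sqrt ((g x) ^ 2) :=
      funext fun x => (Real.sqrt_sq (hg_nonneg x)).symm
    rw [heq]
    exact Real.continuous_sqrt.comp_aestronglyMeasurable h
  have hα_sm : AEStronglyMeasurable α₀ ρ := hα₀.aestronglyMeasurable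
  have hα2_int : Integrable (fun x => (α₀ x) ^ 2) ρ :=
    (memLp_two_iff_integrable_sq hα_sm).mp hα₀
  have hY2_int : Integrable (fun x => (Y x) ^ 2) ρ :=
    (memLp_two_iff_integrable_sq hY.aestronglyMeasurable).mp hY
  -- the dominating bound for the integrand of T α₀
  have hbound_int : Integrable (fun x => g x * |α₀ x|) ρ := by
    have hdom : Integrable (fun x => (1:ℝ)/2 * (g x) ^ 2 + 1/2 * (α₀ x) ^ 2) ρ :=
      (hφ_int.const_mul _).add (hα2_int.const_mul _)
    have haesm : AEStronglyMeasurable (fun x => g x * |α₀ x|) ρ := by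
      have h := hg_aesm.mul hα_sm.norm
      simpa only [Real.norm_eq_abs, Pi.mul_def] using h
    refine hdom.mono' haesm (Filter.Eventually.of_forall fun x => ?_)
    rw [Real.norm_eq_abs, abs_of_nonneg (mul_nonneg (hg_nonneg x) (abs_nonneg (α₀ x)))]
    nlinarith [sq_nonneg (g x - |α₀ x|), sq_abs (α₀ x)]
  -- T α₀ is continuous
  have hu_cont0 : Continuous (fun ω => ∫ x, φ ω x * α₀ x ∂ρ) := by
    apply continuous_of_dominated (bound := fun x => g x * |α₀ x|)
    · intro ω
      exact ((hφ_meas.comp measurable_prodMk_left).aestronglyMeasurable).mul hα_sm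
    · intro ω
      filter_upwards [hφ_cont] with x hx
      have hb : BddAbove (Set.range fun ω' => |φ ω' x|) := (isCompact_range hx.abs).bddAbove
      have h1 : |φ ω x| ≤ g x := le_ciSup hb ω
      rw [Real.norm_eq_abs, abs_mul]
      exact mul_le_mul_of_nonneg_right h1 (abs_nonneg _)
    · exact hbound_int
    · filter_upwards [hφ_cont] with x hx
      exact hx.mul continuous_const
  have hTeq : T α₀ = fun ω => ∫ x, φ ω x * α₀ x ∂ρ := funext fun ω => hT α₀ ω
  have hu_cont : Continuous (T α₀) := by rw [hTeq]; exact hu_cont0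
  -- continuous functions on Ω are μ-integrable
  have hint_of_cont : ∀ h : Ω → ℝ, Continuous h → Integrable h μ := by
    intro h hc
    obtain ⟨ω₀, -, hω₀⟩ :=
      isCompact_univ.exists_isMaxOn Set.univ_nonempty hc.norm.continuousOn
    exact (integrable_const ‖h ω₀‖).mono' hc.aestronglyMeasurable
      (Filter.Eventually.of_forall fun ω => hω₀ (Set.mem_univ ω))
  -- abbreviations
  set A : ℝ := ∫ x, (α₀ x) ^ 2 ∂ρ with hA_def
  set P : ℝ := ∫ x, α₀ x * Y x ∂ρ with hP_def
  set B : ℝ := ∫ x, (Y x) ^ 2 ∂ρ with hB_def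
  set I1 : ℝ := ∫ ω, fs (T α₀ ω) ∂μ with hI1_def
  have hI1_int : Integrable (fun ω => fs (T α₀ ω)) μ :=
    hint_of_cont _ (hfs_cont.comp hu_cont)
  have hI1_lb : -f 0 ≤ I1 := by
    have h := integral_mono (integrable_const (-f 0)) hI1_int (fun ω => hfs_lb (T α₀ ω))
    rwa [integral_const, probReal_univ, one_smul] at h
  -- key inequality for each c ∈ (0,1)
  have key : ∀ c : ℝ, 0 < c → c < 1 → (1 + c) * (lam / 2) * A ≤ P + f 0 := by
    intro c hc0 hc1
    have hβ : MemLp (fun x => c * α₀ x) 2 ρ := hα₀.const_mul c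
    have hDle := hmax _ hβ
    simp only [hD] at hDle
    have hTβ : ∀ ω, T (fun x => c * α₀ x) ω = c * T α₀ ω := by
      intro ω
      simp only [hT]
      rw [show (fun x => φ ω x * (c * α₀ x)) = fun x => c * (φ ω x * α₀ x) from
        funext fun x => by ring]
      exact integral_const_mul c _
    simp only [hTβ] at hDle
    have e2 : (∫ x, c * α₀ x * Y x ∂ρ) = c * P := by
      rw [show (fun x => c * α₀ x * Y x) = fun x => c * (α₀ x * Y x) from
        funext fun x => by ring]
      exact integral_const_mul c _
    have e3 : (∫ x, (c * α₀ x) ^ 2 ∂ρ) = c ^ 2 * A := by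
      rw [show (fun x => (c * α₀ x) ^ 2) = fun x => c ^ 2 * (α₀ x) ^ 2 from
        funext fun x => by ring]
      exact integral_const_mul _ _
    rw [e2, e3] at hDle
    set Ic : ℝ := ∫ ω, fs (c * T α₀ ω) ∂μ with hIc_def
    have hIc_int : Integrable (fun ω => fs (c * T α₀ ω)) μ :=
      hint_of_cont _ (hfs_cont.comp (continuous_const.mul hu_cont))
    have hIc_le : Ic ≤ (1 - c) * fs 0 + c * I1 := by
      have hg_int : Integrable (fun ω => (1 - c) * fs 0 + c * fs (T α₀ ω)) μ :=
        (integrable_const _).add (hI1_int.const_mul c)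
      have h := integral_mono hIc_int hg_int
        (fun ω => hfs_comb (T α₀ ω) c hc0.le hc1.le)
      have heq : ∫ ω, ((1 - c) * fs 0 + c * fs (T α₀ ω)) ∂μ = (1 - c) * fs 0 + c * I1 := by
        rw [integral_add (integrable_const _) (hI1_int.const_mul c), integral_const,
          probReal_univ, one_smul, integral_const_mul]
      rwa [heq] at h
    have h6 : (1 - c) * fs 0 ≤ 0 :=
      mul_nonpos_of_nonneg_of_nonpos (by linarith) hfs0
    have h7 : (1 - c) * (-I1) ≤ (1 - c) * f 0 :=
      mul_le_mul_of_nonneg_left (by linarith) (by linarith)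
    have h5 : (1 - c) * ((1 + c) * (lam / 2) * A) ≤ (1 - c) * (P + f 0) := by
      nlinarith [hDle, hIc_le, h6, h7]
    exact (mul_le_mul_iff_right₀ (by linarith : (0:ℝ) < 1 - c)).mp h5
  -- take c → 1⁻
  have hlimit : lam * A ≤ P + f 0 := by
    have h1c : (1 : ℝ) ∈ closure (Set.Ioo (0 : ℝ) 1) := by
      rw [closure_Ioo (by norm_num : (0:ℝ) ≠ 1)]
      exact ⟨by norm_num, le_refl 1⟩
    haveI hne : (𝓝[Set.Ioo (0:ℝ) 1] (1:ℝ)).NeBot :=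
      mem_closure_iff_nhdsWithin_neBot.mp h1c
    have hcont : Continuous fun c : ℝ => (1 + c) * (lam / 2) * A :=
      ((continuous_const.add continuous_id).mul continuous_const).mul continuous_const
    have htend : Tendsto (fun c : ℝ => (1 + c) * (lam / 2) * A)
        (𝓝[Set.Ioo (0:ℝ) 1] 1) (𝓝 (lam * A)) := by
      have heq : lam * A = (1 + (1:ℝ)) * (lam / 2) * A := by ring
      rw [heq]
      exact (hcont.tendsto 1).mono_left nhdsWithin_le_nhds
    refine le_of_tendsto htend ?_
    filter_upwards [self_mem_nhdsWithin] with c hc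
    exact key c hc.1 hc.2
  -- Cauchy–Schwarz via AM-GM with parameter lam
  have hAY : Integrable (fun x => α₀ x * Y x) ρ := by
    have hdom : Integrable (fun x => lam / 2 * (α₀ x) ^ 2 + 1 / (2 * lam) * (Y x) ^ 2) ρ :=
      (hα2_int.const_mul _).add (hY2_int.const_mul _)
    refine hdom.mono' (hα_sm.mul hY.aestronglyMeasurable)
      (Filter.Eventually.of_forall fun x => ?_)
    rw [Real.norm_eq_abs]
    have h1 : 2 * lam * |α₀ x * Y x| ≤ lam ^ 2 * (α₀ x) ^ 2 + (Y x) ^ 2 := by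
      rcases abs_cases (α₀ x * Y x) with ⟨h, _⟩ | ⟨h, _⟩ <;> rw [h] <;>
        nlinarith [sq_nonneg (lam * α₀ x - Y x), sq_nonneg (lam * α₀ x + Y x)]
    have h2 : lam / 2 * (α₀ x) ^ 2 + 1 / (2 * lam) * (Y x) ^ 2 - |α₀ x * Y x|
        = (lam ^ 2 * (α₀ x) ^ 2 + (Y x) ^ 2 - 2 * lam * |α₀ x * Y x|) / (2 * lam) := by
      field_simp
    linarith [div_nonneg (by linarith : (0:ℝ) ≤ lam ^ 2 * (α₀ x) ^ 2 + (Y x) ^ 2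
      - 2 * lam * |α₀ x * Y x|) (by linarith : (0:ℝ) ≤ 2 * lam), h2.ge, h2.le]
  have hP_le : P ≤ lam / 2 * A + 1 / (2 * lam) * B := by
    have hptwise : ∀ x, α₀ x * Y x ≤ lam / 2 * (α₀ x) ^ 2 + 1 / (2 * lam) * (Y x) ^ 2 := by
      intro x
      have h1 : 2 * lam * (α₀ x * Y x) ≤ lam ^ 2 * (α₀ x) ^ 2 + (Y x) ^ 2 := by
        nlinarith [sq_nonneg (lam * α₀ x - Y x)]
      have h2 : lam / 2 * (α₀ x) ^ 2 + 1 / (2 * lam) * (Y x) ^ 2 - α₀ x * Y x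
          = (lam ^ 2 * (α₀ x) ^ 2 + (Y x) ^ 2 - 2 * lam * (α₀ x * Y x)) / (2 * lam) := by
        field_simp
      linarith [div_nonneg (by linarith : (0:ℝ) ≤ lam ^ 2 * (α₀ x) ^ 2 + (Y x) ^ 2
        - 2 * lam * (α₀ x * Y x)) (by linarith : (0:ℝ) ≤ 2 * lam), h2.ge, h2.le]
    have hg_int : Integrable (fun x => lam / 2 * (α₀ x) ^ 2 + 1 / (2 * lam) * (Y x) ^ 2) ρ :=
      (hα2_int.const_mul _).add (hY2_int.const_mul _)
    have h := integral_mono hAY hg_int hptwise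
    have heq : ∫ x, (lam / 2 * (α₀ x) ^ 2 + 1 / (2 * lam) * (Y x) ^ 2) ∂ρ
        = lam / 2 * A + 1 / (2 * lam) * B := by
      rw [integral_add (hα2_int.const_mul _) (hY2_int.const_mul _),
        integral_const_mul, integral_const_mul]
    rwa [heq] at h
  -- conclude
  have hfinal : lam ^ 2 * A ≤ B + 2 * lam * f 0 := by
    have h4 : lam / 2 * A ≤ 1 / (2 * lam) * B + f 0 := by linarith
    have hne2 : (2 * lam) ≠ 0 := by positivity
    have h5 := mul_le_mul_of_nonneg_left h4 (by positivity : (0:ℝ) ≤ 2 * lam)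
    calc lam ^ 2 * A = 2 * lam * (lam / 2 * A) := by ring
      _ ≤ 2 * lam * (1 / (2 * lam) * B + f 0) := h5
      _ = B + 2 * lam * f 0 := by field_simp
  have h6 : A ≤ lam⁻¹ ^ 2 * (B + 2 * lam * f 0) := by
    have h7 := mul_le_mul_of_nonneg_left hfinal
      (by positivity : (0:ℝ) ≤ lam⁻¹ ^ 2)
    calc A = lam⁻¹ ^ 2 * (lam ^ 2 * A) := by field_simp
      _ ≤ lam⁻¹ ^ 2 * (B + 2 * lam * f 0) := h7
  have h8 := Real.sqrt_le_sqrt h6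
  rwa [Real.sqrt_mul (by positivity) , Real.sqrt_sq (by positivity : (0:ℝ) ≤ lam⁻¹)] at h8
end

section
/- Assume f satisfies (A), φ has the stated integrability, and (TS) holds. Fix a Borel probability measure μ on Ω and let u† ∈ L¹(μ) be a minimizer of ∫_Ω f(u) dμ subject to Φ_μ u = Y. Suppose the source condition holds: the set S := { α ∈ L²(ρ) : for μ-a.e. ω, (Φ^⊤α)(ω) is a subgradient of f at u†(ω), i.e. f(t) ≥ f(u†(ω)) + (Φ^⊤α)(ω)(t − u†(ω)) for all t ∈ ℝ } is nonempty, and let α† be the element of S of minimal L²(ρ)-norm. Then, for every λ > 0, the unique maximizer α^λ_f[μ] over L²(ρ) of α ↦ −∫_Ω f*(Φ^⊤α) dμ + ⟨α, Y⟩_{L²(ρ)} − (λ/2)‖α‖²_{L²(ρ)} satisfies ‖α^λ_f[μ]‖_{L²(ρ)} ≤ ‖α†‖_{L²(ρ)}, and α^λ_f[μ] converges strongly in L²(ρ) to α† as λ → 0⁺. -/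
open MeasureTheory Filter Topology
open scoped ENNReal

section Helpers
variable {X : Type*} [MeasurableSpace X] {ρ : Measure X}

lemma inner_toLp_eq {g h : X → ℝ} (hg : MemLp g 2 ρ) (hh : MemLp h 2 ρ) :
    (inner ℝ (hg.toLp g) (hh.toLp h) : ℝ) = ∫ x, g x * h x ∂ρ := by
  rw [L2.inner_def]
  refine integral_congr_ae ?_
  filter_upwards [hg.coeFn_toLp, hh.coeFn_toLp] with x h1 h2
  simp [h1, h2, RCLike.inner_apply, mul_comm]

lemma norm_toLp_sq_eq {g : X → ℝ} (hg : MemLp g 2 ρ) :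
    ‖hg.toLp g‖ ^ 2 = ∫ x, (g x) ^ 2 ∂ρ := by
  rw [← real_inner_self_eq_norm_sq, inner_toLp_eq hg hg]
  exact integral_congr_ae (ae_of_all _ fun x => (sq (g x)).symm)

lemma l2_mul_integrable {g h : X → ℝ} (hg : MemLp g 2 ρ) (hh : MemLp h 2 ρ) :
    Integrable (fun x => g x * h x) ρ := by
  have := L2.integrable_inner (𝕜 := ℝ) (hg.toLp g) (hh.toLp h)
  refine this.congr ?_
  filter_upwards [hg.coeFn_toLp, hh.coeFn_toLp] with x h1 h2
  simp [h1, h2, RCLike.inner_apply, mul_comm]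

lemma l2_integral_mul_le {g h : X → ℝ} (hg : MemLp g 2 ρ) (hh : MemLp h 2 ρ)
    :
    ∫ x, g x * h x ∂ρ ≤ Real.sqrt (∫ x, (g x)^2 ∂ρ) * Real.sqrt (∫ x, (h x)^2 ∂ρ) := by
  have h1 : (inner ℝ (hg.toLp g) (hh.toLp h) : ℝ) ≤ ‖hg.toLp g‖ * ‖hh.toLp h‖ :=
    real_inner_le_norm _ _
  rw [inner_toLp_eq hg hh] at h1
  have e1 : ‖hg.toLp g‖ = Real.sqrt (∫ x, (g x)^2 ∂ρ) := by
    rw [← norm_toLp_sq_eq hg, Real.sqrt_sq (norm_nonneg _)]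
  have e2 : ‖hh.toLp h‖ = Real.sqrt (∫ x, (h x)^2 ∂ρ) := by
    rw [← norm_toLp_sq_eq hh, Real.sqrt_sq (norm_nonneg _)]
  rw [e1, e2] at h1
  exact h1

end Helpers

section FS
variable (f fs : ℝ → ℝ)
  (hf_nonneg : ∀ t, 0 ≤ f t)
  (hf_conv : StrictConvexOn ℝ Set.univ f)
  (hf_super : Tendsto (fun t : ℝ => f t / |t|) (cocompact ℝ) atTop)
  (hfs : ∀ s, fs s = ⨆ t : ℝ, (s * t - f t))

include hf_nonneg hf_super in
lemma fs_bdd : ∀ s : ℝ, BddAbove (Set.range fun t => s * t - f t) := by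
  intro s
  have h := hf_super.eventually (eventually_ge_atTop (|s| + 1))
  rw [(hasBasis_cocompact).eventually_iff] at h
  obtain ⟨K, hK, hKs⟩ := h
  obtain ⟨R, hR⟩ := hK.isBounded.subset_closedBall 0
  refine ⟨max (|s| * R) 0, ?_⟩
  rintro _ ⟨t, rfl⟩
  by_cases ht : t ∈ K
  · have h1 : |t| ≤ R := by simpa [Real.norm_eq_abs] using hR ht
    have h2 : s * t ≤ |s| * R := by
      calc s * t ≤ |s * t| := le_abs_self _
      _ = |s| * |t| := abs_mul s t
      _ ≤ |s| * R := by
        have := abs_nonneg s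
        nlinarith
    have := hf_nonneg t
    simp only [le_max_iff]
    left; linarith
  · have h1 : |s| + 1 ≤ f t / |t| := hKs ht
    rcases eq_or_ne t 0 with rfl | ht0
    · simp at h1; nlinarith [abs_nonneg s]
    · have ht0' : 0 < |t| := abs_pos.2 ht0
      have h2 : (|s| + 1) * |t| ≤ f t := by
        rw [← le_div_iff₀ ht0']
        exact h1
      have h3 : s * t ≤ |s| * |t| := by
        calc s * t ≤ |s * t| := le_abs_self _
        _ = |s| * |t| := abs_mul s t
      simp only [le_max_iff]
      right; nlinarith

include hf_nonneg hf_super hfs in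
lemma fs_young : ∀ s t : ℝ, s * t - f t ≤ fs s := by
  intro s t
  rw [hfs s]
  exact le_ciSup (fs_bdd f hf_nonneg hf_super s) t

include hf_nonneg hf_super hfs in
lemma fs_of_subgrad : ∀ s u : ℝ, (∀ t, f u + s * (t - u) ≤ f t) → fs s = s * u - f u := by
  intro s u h
  refine le_antisymm ?_ (fs_young f fs hf_nonneg hf_super hfs s u)
  rw [hfs s]
  refine ciSup_le fun t => ?_
  have := h t
  nlinarith

include hf_nonneg hf_super hfs in
lemma fs_to_subgrad : ∀ s u : ℝ, fs s ≤ s * u - f u → ∀ t, f u + s * (t - u) ≤ f t := by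
  intro s u h t
  have := fs_young f fs hf_nonneg hf_super hfs s t
  nlinarith

include hf_nonneg hf_super hfs in
lemma fs_convex : ConvexOn ℝ Set.univ fs := by
  refine ⟨convex_univ, fun a _ b _ p q hp hq hpq => ?_⟩
  rw [hfs (p • a + q • b)]
  refine ciSup_le fun t => ?_
  have h1 := fs_young f fs hf_nonneg hf_super hfs a t
  have h2 := fs_young f fs hf_nonneg hf_super hfs b t
  have : (p • a + q • b) * t - f t = p * (a * t - f t) + q * (b * t - f t) := by
    simp only [smul_eq_mul]; linear_combination (f t) * hpq
  rw [this]
  simp only [smul_eq_mul]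
  nlinarith [mul_le_mul_of_nonneg_left h1 hp, mul_le_mul_of_nonneg_left h2 hq]

include hf_nonneg hf_super hfs in
lemma fs_cont : Continuous fs := by
  have h := (fs_convex f fs hf_nonneg hf_super hfs).continuousOn isOpen_univ
  rw [← continuousOn_univ]
  exact h

end FS

lemma hilbert_tikhonov {E : Type*} [NormedAddCommGroup E] [InnerProductSpace ℝ E]
    [CompleteSpace E]
    (D : E → ℝ) (ad : E) (B : ℝ → E)
    (hmid : ∀ x y : E, D x + D y ≤ 2 * D ((1/2 : ℝ) • (x + y)))
    (hmax : ∀ x, D x ≤ D ad)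
    (hnormmin : ∀ x, D ad ≤ D x → ‖ad‖ ≤ ‖x‖)
    (hDcont : ∀ (u : ℕ → E) (y : E), (∀ n, ‖u n‖ ≤ ‖ad‖) → Tendsto u atTop (𝓝 y) →
        Tendsto (fun n => D (u n)) atTop (𝓝 (D y)))
    (hopt : ∀ l : ℝ, 0 < l → ∀ x : E, D x - l/2 * ‖x‖^2 ≤ D (B l) - l/2 * ‖B l‖^2) :
    (∀ l : ℝ, 0 < l → ‖B l‖^2 ≤ ‖ad‖^2) ∧
    Tendsto (fun l => ‖B l - ad‖^2) (𝓝[>] (0:ℝ)) (𝓝 0) := by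
  -- midpoint norm identity
  have hpar : ∀ x y : E, ‖(1/2 : ℝ) • (x + y)‖^2
      = ‖x‖^2/2 + ‖y‖^2/2 - ‖x - y‖^2/4 := by
    intro x y
    have h := parallelogram_law_with_norm ℝ x y
    have h2 : ‖(1/2 : ℝ) • (x + y)‖ = (1/2) * ‖x + y‖ := by
      rw [norm_smul]; simp
    rw [h2]
    nlinarith [h, norm_nonneg (x+y), norm_nonneg (x-y)]
  -- part 1
  have part1 : ∀ l : ℝ, 0 < l → ‖B l‖^2 ≤ ‖ad‖^2 := by
    intro l hl
    have h1 := hopt l hl ad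
    have h2 := hmax (B l)
    nlinarith
  -- strong concavity estimate
  have hstrong : ∀ l : ℝ, 0 < l → ∀ x : E,
      l/4 * ‖B l - x‖^2 ≤ (D (B l) - D x) + l/2 * (‖x‖^2 - ‖B l‖^2) := by
    intro l hl x
    have h1 := hopt l hl ((1/2 : ℝ) • (B l + x))
    have h2 := hmid (B l) x
    have h3 := hpar (B l) x
    nlinarith
  -- distance to ad controlled by norm gap
  have hdista : ∀ l : ℝ, 0 < l → ‖B l - ad‖^2 ≤ 2 * (‖ad‖^2 - ‖B l‖^2) := by
    intro l hl
    have h1 := hstrong l hl ad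
    have h2 := hmax (B l)
    nlinarith
  -- monotonicity of l ↦ ‖B l‖²
  have hmono : ∀ l l' : ℝ, 0 < l → l ≤ l' → ‖B l'‖^2 ≤ ‖B l‖^2 := by
    intro l l' hl hll'
    have hl' : 0 < l' := lt_of_lt_of_le hl hll'
    have h1 := hopt l hl (B l')
    have h2 := hopt l' hl' (B l)
    rcases eq_or_lt_of_le hll' with rfl | h
    · linarith
    · nlinarith
  -- pairwise distance bound
  have hpair : ∀ l l' : ℝ, 0 < l → l < l' →
      ‖B l - B l'‖^2 ≤ 2 * (‖B l‖^2 - ‖B l'‖^2) := by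
    intro l l' hl hll'
    have hl' : 0 < l' := hl.trans hll'
    have h1 := hstrong l hl (B l')
    have h2 := hstrong l' hl' (B l)
    have h3 : ‖B l' - B l‖ = ‖B l - B l'‖ := by rw [← norm_neg]; congr 1; abel
    rw [h3] at h2
    have hm := hmono l l' hl hll'.le
    nlinarith
  -- the sequence lₙ = 1/(n+1)
  set L : ℕ → ℝ := fun n => 1/(n+1) with hL
  have hLpos : ∀ n, 0 < L n := fun n => by positivity
  have hLanti : ∀ n m : ℕ, n ≤ m → L m ≤ L n := by
    intro n m hnm
    apply one_div_le_one_div_of_le (by positivity)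
    exact_mod_cast by gcongr
  have hLto : Tendsto L atTop (𝓝 0) := tendsto_one_div_add_atTop_nhds_zero_nat
  set c : ℕ → ℝ := fun n => ‖B (L n)‖^2 with hc
  have hcmono : Monotone c := by
    intro n m hnm
    exact hmono (L m) (L n) (hLpos m) (hLanti n m hnm)
  have hcbdd : BddAbove (Set.range c) := ⟨‖ad‖^2, by
    rintro _ ⟨n, rfl⟩; exact part1 (L n) (hLpos n)⟩
  have hcconv : Tendsto c atTop (𝓝 (⨆ n, c n)) := tendsto_atTop_ciSup hcmono hcbdd
  set cinf : ℝ := ⨆ n, c n with hcinf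
  -- Cauchy sequence
  have hcauchy : CauchySeq (fun n => B (L n)) := by
    rw [Metric.cauchySeq_iff]
    intro ε hε
    have hc2 : CauchySeq c := hcconv.cauchySeq
    rw [Metric.cauchySeq_iff] at hc2
    obtain ⟨N, hN⟩ := hc2 (ε^2/2) (by positivity)
    refine ⟨N, fun m hm n hn => ?_⟩
    have key : ∀ i j, N ≤ i → N ≤ j → i ≤ j → dist (B (L j)) (B (L i)) < ε := by
      intro i j hi hj hij
      rcases eq_or_lt_of_le hij with rfl | hij'
      · simpa [dist_self] using hε
      have hLlt : L j ≤ L i := hLanti i j hij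
      have hd : ‖B (L j) - B (L i)‖^2 ≤ 2 * (c j - c i) := by
        rcases eq_or_lt_of_le hLlt with hEq | hlt
        · simp only [hc]
          rw [hEq]
          simp [sub_self]
        · have := hpair (L j) (L i) (hLpos j) hlt
          simp only [hc]
          linarith
      have hdist := hN j hj i hi
      rw [Real.dist_eq] at hdist
      have h2 : ‖B (L j) - B (L i)‖^2 < ε^2 := by
        calc ‖B (L j) - B (L i)‖^2 ≤ 2 * (c j - c i) := hd
        _ ≤ 2 * |c j - c i| := by nlinarith [le_abs_self (c j - c i)]
        _ < ε^2 := by linarith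
      rw [dist_eq_norm]
      nlinarith [norm_nonneg (B (L j) - B (L i))]
    rcases le_total m n with h | h
    · rw [dist_comm]; exact key m n hm hn h
    · exact key n m hn hm h
  obtain ⟨y, hy⟩ := cauchySeq_tendsto_of_complete hcauchy
  -- identify limits
  have hnormy : Tendsto c atTop (𝓝 (‖y‖^2)) := by
    have : Tendsto (fun n => ‖B (L n)‖) atTop (𝓝 ‖y‖) := hy.norm
    simpa [hc] using this.pow 2
  have hcinf_eq : cinf = ‖y‖^2 := tendsto_nhds_unique hcconv hnormy
  have hcle : ∀ n, c n ≤ ‖ad‖^2 := fun n => part1 (L n) (hLpos n)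
  have hcinf_le : cinf ≤ ‖ad‖^2 := by
    rw [hcinf]
    exact ciSup_le hcle
  -- D along the sequence
  have hDy : Tendsto (fun n => D (B (L n))) atTop (𝓝 (D y)) := by
    refine hDcont (fun n => B (L n)) y (fun n => ?_) hy
    have := part1 (L n) (hLpos n)
    nlinarith [norm_nonneg (B (L n)), norm_nonneg ad]
  have hDlow : ∀ n, D ad - L n / 2 * ‖ad‖^2 ≤ D (B (L n)) := by
    intro n
    have h1 := hopt (L n) (hLpos n) ad
    have h2 : (0:ℝ) ≤ ‖B (L n)‖^2 := sq_nonneg _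
    nlinarith [hLpos n]
  have hDyge : D ad ≤ D y := by
    have hto : Tendsto (fun n => D ad - L n / 2 * ‖ad‖^2) atTop (𝓝 (D ad)) := by
      have : Tendsto (fun n => L n / 2 * ‖ad‖^2) atTop (𝓝 0) := by
        have := (hLto.div_const 2).mul_const (‖ad‖^2)
        simpa using this
      have h2 := (tendsto_const_nhds (x := D ad) (f := atTop (α := ℕ))).sub this
      simpa using h2
    exact le_of_tendsto_of_tendsto' hto hDy hDlow
  -- conclude cinf = ‖ad‖²
  have hfin : cinf = ‖ad‖^2 := by
    have h1 := hnormmin y hDyge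
    have h2 : ‖ad‖^2 ≤ ‖y‖^2 := by nlinarith [norm_nonneg ad, norm_nonneg y]
    rw [hcinf_eq]
    linarith [hcinf_le, hcinf_eq ▸ hcinf_le]
  -- final ε-δ argument
  refine ⟨part1, ?_⟩
  rw [Metric.tendsto_nhdsWithin_nhds]
  intro ε hε
  -- choose n with ‖ad‖² - c n < ε/4
  have : ∀ᶠ n in atTop, ‖ad‖^2 - c n < ε/4 := by
    have := hcconv
    rw [hfin] at this
    have h2 := this.eventually (eventually_gt_nhds (show ‖ad‖^2 - ε/4 < ‖ad‖^2 by linarith))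
    filter_upwards [h2] with n hn
    linarith
  obtain ⟨n, hn⟩ := this.exists
  refine ⟨L n, hLpos n, fun {l} hl hld => ?_⟩
  have hl' : 0 < l := hl
  rw [Real.dist_eq, sub_zero, abs_of_pos hl'] at hld
  have hcl : c n ≤ ‖B l‖^2 := hmono l (L n) hl' hld.le
  have hble := hdista l hl'
  have h0 : (0:ℝ) ≤ ‖B l - ad‖^2 := sq_nonneg _
  rw [Real.dist_eq, sub_zero, abs_of_nonneg h0]
  have : ‖B l - ad‖^2 ≤ 2 * (‖ad‖^2 - c n) := by linarith
  linarith


/-- Under a source condition, the dual maximizers `α^λ_f[μ]` are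
uniformly bounded by the minimal-norm source element `α†` and converge strongly to it
in `L²(ρ)` as `λ → 0⁺`. -/
theorem stmt_16
    {Ω : Type*} [MetricSpace Ω] [CompactSpace Ω] [MeasurableSpace Ω] [BorelSpace Ω]
    {d : ℕ}
    (μ : Measure Ω) [IsProbabilityMeasure μ]
    (ρ : Measure (EuclideanSpace ℝ (Fin d))) [IsProbabilityMeasure ρ]
    (Y : EuclideanSpace ℝ (Fin d) → ℝ) (hY : MemLp Y 2 ρ)
    (φ : Ω → EuclideanSpace ℝ (Fin d) → ℝ)
    (hφ_meas : Measurable (Function.uncurry φ))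
    (hφ_cont : ∀ᵐ x ∂ρ, Continuous fun ω => φ ω x)
    (hφ_int : Integrable (fun x => (⨆ ω, |φ ω x|) ^ 2) ρ)
    (f : ℝ → ℝ)
    (hf_nonneg : ∀ t, 0 ≤ f t)
    (hf_conv : StrictConvexOn ℝ Set.univ f)
    (hf_super : Tendsto (fun t : ℝ => f t / |t|) (cocompact ℝ) atTop)
    (fs : ℝ → ℝ) (hfs : ∀ s, fs s = ⨆ t : ℝ, (s * t - f t))
    -- teacher–student assumption (TS)
    (νbar : SignedMeasure Ω)
    (hTS : phiStar φ νbar =ᵐ[ρ] Y)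
    (hinj : ∀ ν₁ ν₂ : SignedMeasure Ω,
      phiStar φ ν₁ =ᵐ[ρ] phiStar φ ν₂ → ν₁ = ν₂)
    -- the feature operator Φ_μ and the adjoint Φ^⊤
    (F : (Ω → ℝ) → EuclideanSpace ℝ (Fin d) → ℝ)
    (hF : ∀ u x, F u x = ∫ ω, φ ω x * u ω ∂μ)
    (T : (EuclideanSpace ℝ (Fin d) → ℝ) → Ω → ℝ)
    (hT : ∀ β ω, T β ω = ∫ x, φ ω x * β x ∂ρ)
    -- u† is a minimizer of ∫ f(u) dμ subject to Φ_μ u = Y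
    (udag : Ω → ℝ)
    (hudag_int : Integrable udag μ)
    (hudag_feas : F udag =ᵐ[ρ] Y)
    (hudag_min : ∀ u : Ω → ℝ, Integrable u μ → F u =ᵐ[ρ] Y →
      (∫⁻ ω, ENNReal.ofReal (f (udag ω)) ∂μ) ≤ ∫⁻ ω, ENNReal.ofReal (f (u ω)) ∂μ)
    -- the source condition, and α† the minimal-norm source element
    (αdag : EuclideanSpace ℝ (Fin d) → ℝ)
    (hαdag_mem : MemLp αdag 2 ρ)
    (hαdag_src : ∀ᵐ ω ∂μ, ∀ t : ℝ, f (udag ω) + T αdag ω * (t - udag ω) ≤ f t)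
    (hαdag_min : ∀ β : EuclideanSpace ℝ (Fin d) → ℝ, MemLp β 2 ρ →
      (∀ᵐ ω ∂μ, ∀ t : ℝ, f (udag ω) + T β ω * (t - udag ω) ≤ f t) →
      (∫ x, (αdag x) ^ 2 ∂ρ) ≤ ∫ x, (β x) ^ 2 ∂ρ)
    -- α^λ_f[μ], the dual maximizers for λ > 0
    (A : ℝ → EuclideanSpace ℝ (Fin d) → ℝ)
    (hA : ∀ l : ℝ, 0 < l → MemLp (A l) 2 ρ ∧
      ∀ β, MemLp β 2 ρ →
        (-(∫ ω, fs (T β ω) ∂μ) + (∫ x, β x * Y x ∂ρ) - l / 2 * ∫ x, (β x) ^ 2 ∂ρ)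
          ≤ (-(∫ ω, fs (T (A l) ω) ∂μ) + (∫ x, A l x * Y x ∂ρ)
            - l / 2 * ∫ x, (A l x) ^ 2 ∂ρ)) :
    -- uniform norm bound and strong L²(ρ) convergence as λ → 0⁺
    (∀ l : ℝ, 0 < l → (∫ x, (A l x) ^ 2 ∂ρ) ≤ ∫ x, (αdag x) ^ 2 ∂ρ)
    ∧
    Tendsto (fun l => ∫ x, (A l x - αdag x) ^ 2 ∂ρ) (𝓝[>] (0 : ℝ)) (𝓝 0) := by
  have hΩ : Nonempty Ω := by
    by_contra h
    rw [not_nonempty_iff] at h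
    have h1 : μ Set.univ = 1 := measure_univ
    rw [Set.univ_eq_empty_iff.mpr h, measure_empty] at h1
    exact zero_ne_one h1
  set Φ : EuclideanSpace ℝ (Fin d) → ℝ := fun x => ⨆ ω, |φ ω x| with hΦdef
  have hΦ0 : ∀ x, 0 ≤ Φ x := fun x => Real.iSup_nonneg fun ω => abs_nonneg _
  have hΦmem : MemLp Φ 2 ρ := by
    have h2 : AEStronglyMeasurable (fun x => (Φ x)^2) ρ := hφ_int.1
    have hsm : AEStronglyMeasurable Φ ρ := by
      have : Φ = fun x => Real.sqrt ((Φ x)^2) := funext fun x => (Real.sqrt_sq (hΦ0 x)).symm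
      rw [this]
      exact Real.continuous_sqrt.comp_aestronglyMeasurable h2
    exact (memLp_two_iff_integrable_sq hsm).2 hφ_int
  have hφle : ∀ᵐ x ∂ρ, ∀ ω, |φ ω x| ≤ Φ x := by
    filter_upwards [hφ_cont] with x hx ω
    exact le_ciSup (isCompact_range hx.abs).bddAbove ω
  -- sections of φ are measurable
  have hφsec : ∀ ω, Measurable (fun x => φ ω x) := fun ω => hφ_meas.of_uncurry_left
  have habs : ∀ (β : EuclideanSpace ℝ (Fin d) → ℝ), MemLp β 2 ρ →
      MemLp (fun x => |β x|) 2 ρ := by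
    intro β hβ
    simpa [Real.norm_eq_abs] using hβ.norm
  have hT_int : ∀ (β : EuclideanSpace ℝ (Fin d) → ℝ), MemLp β 2 ρ → ∀ ω,
      Integrable (fun x => φ ω x * β x) ρ := by
    intro β hβ ω
    have hdom : Integrable (fun x => Φ x * |β x|) ρ := l2_mul_integrable hΦmem (habs β hβ)
    refine hdom.mono' ((hφsec ω).aestronglyMeasurable.mul hβ.1) ?_
    filter_upwards [hφle] with x hx
    rw [Real.norm_eq_abs, abs_mul]
    exact mul_le_mul_of_nonneg_right (hx ω) (abs_nonneg _)
  have hT_congr : ∀ (g h : EuclideanSpace ℝ (Fin d) → ℝ), g =ᵐ[ρ] h → ∀ ω, T g ω = T h ω := by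
    intro g h hgh ω
    rw [hT, hT]
    refine integral_congr_ae ?_
    filter_upwards [hgh] with x hx
    rw [hx]
  set CΦ : ℝ := Real.sqrt (∫ x, (Φ x)^2 ∂ρ) with hCΦ
  have hCΦ0 : 0 ≤ CΦ := Real.sqrt_nonneg _
  have hT_bd : ∀ (β : EuclideanSpace ℝ (Fin d) → ℝ), MemLp β 2 ρ → ∀ ω,
      |T β ω| ≤ CΦ * Real.sqrt (∫ x, (β x)^2 ∂ρ) := by
    intro β hβ ω
    rw [hT]
    have hsq : ∫ x, (|β x|)^2 ∂ρ = ∫ x, (β x)^2 ∂ρ :=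
      integral_congr_ae (ae_of_all _ fun x => by simp [sq_abs])
    calc |∫ x, φ ω x * β x ∂ρ| ≤ ∫ x, |φ ω x * β x| ∂ρ := by
          simpa only [Real.norm_eq_abs] using
            norm_integral_le_integral_norm (μ := ρ) (f := fun x => φ ω x * β x)
    _ ≤ ∫ x, Φ x * |β x| ∂ρ := by
          refine integral_mono_ae ((hT_int β hβ ω).abs) (l2_mul_integrable hΦmem (habs β hβ)) ?_
          filter_upwards [hφle] with x hx
          rw [abs_mul]
          exact mul_le_mul_of_nonneg_right (hx ω) (abs_nonneg _)
    _ ≤ CΦ * Real.sqrt (∫ x, (|β x|)^2 ∂ρ) := l2_integral_mul_le hΦmem (habs β hβ)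
    _ = CΦ * Real.sqrt (∫ x, (β x)^2 ∂ρ) := by rw [hsq]
  have hT_sub : ∀ (g h : EuclideanSpace ℝ (Fin d) → ℝ), MemLp g 2 ρ → MemLp h 2 ρ → ∀ ω,
      T (fun x => g x - h x) ω = T g ω - T h ω := by
    intro g h hg hh ω
    rw [hT, hT, hT, ← integral_sub (hT_int g hg ω) (hT_int h hh ω)]
    refine integral_congr_ae (ae_of_all _ fun x => ?_)
    ring
  have hT_mid : ∀ (g h : EuclideanSpace ℝ (Fin d) → ℝ), MemLp g 2 ρ → MemLp h 2 ρ → ∀ ω,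
      T (fun x => (g x + h x)/2) ω = (T g ω + T h ω)/2 := by
    intro g h hg hh ω
    rw [hT, hT, hT, ← integral_add (hT_int g hg ω) (hT_int h hh ω), ← integral_div]
    refine integral_congr_ae (ae_of_all _ fun x => ?_)
    ring
  have hT_meas : ∀ (β : EuclideanSpace ℝ (Fin d) → ℝ), MemLp β 2 ρ →
      AEStronglyMeasurable (fun ω => T β ω) μ := by
    intro β hβ
    set β' := hβ.1.mk β with hβ'
    have hsm2 : StronglyMeasurable β' := hβ.1.stronglyMeasurable_mk
    have he : (fun ω => T β ω) = fun ω => ∫ x, φ ω x * β' x ∂ρ := by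
      funext ω
      rw [hT]
      refine integral_congr_ae ?_
      filter_upwards [hβ.1.ae_eq_mk] with x hx
      rw [hx]
    rw [he]
    have hm : StronglyMeasurable (Function.uncurry fun ω x => φ ω x * β' x) := by
      have : Measurable (Function.uncurry fun (ω : Ω) (x : EuclideanSpace ℝ (Fin d)) =>
          φ ω x * β' x) := hφ_meas.mul (hsm2.measurable.comp measurable_snd)
      exact this.stronglyMeasurable
    exact hm.integral_prod_right.aestronglyMeasurable
  -- instantiated fs lemmas
  have young := fs_young f fs hf_nonneg hf_super hfs
  have hfs_sub := fs_to_subgrad f fs hf_nonneg hf_super hfs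
  have hfs_val := fs_of_subgrad f fs hf_nonneg hf_super hfs
  have hfs_ct := fs_cont f fs hf_nonneg hf_super hfs
  have hfc : Continuous f := by
    have h := hf_conv.convexOn.continuousOn isOpen_univ
    rw [← continuousOn_univ]; exact h
  have hfsT_int : ∀ (β : EuclideanSpace ℝ (Fin d) → ℝ), MemLp β 2 ρ →
      Integrable (fun ω => fs (T β ω)) μ := by
    intro β hβ
    set M := CΦ * Real.sqrt (∫ x, (β x)^2 ∂ρ) with hM
    have hM0 : 0 ≤ M := mul_nonneg hCΦ0 (Real.sqrt_nonneg _)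
    obtain ⟨Bd, hBd⟩ := (isCompact_Icc (a := -M) (b := M)).exists_bound_of_continuousOn
      hfs_ct.continuousOn
    refine (integrable_const Bd).mono' (hfs_ct.comp_aestronglyMeasurable (hT_meas β hβ)) ?_
    refine ae_of_all _ fun ω => ?_
    have h1 := abs_le.1 (hT_bd β hβ ω)
    have h2 : T β ω ∈ Set.Icc (-M) M := Set.mem_Icc.2 ⟨h1.1, h1.2⟩
    simpa using hBd _ h2
  have hTudag_int : ∀ (β : EuclideanSpace ℝ (Fin d) → ℝ), MemLp β 2 ρ →
      Integrable (fun ω => T β ω * udag ω) μ := by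
    intro β hβ
    exact hudag_int.bdd_mul (c := CΦ * Real.sqrt (∫ x, (β x)^2 ∂ρ)) (hT_meas β hβ) (ae_of_all _ fun ω => by
      simpa [Real.norm_eq_abs] using hT_bd β hβ ω)
  -- Fubini key identity
  have hkey : ∀ (β : EuclideanSpace ℝ (Fin d) → ℝ), MemLp β 2 ρ →
      ∫ x, β x * Y x ∂ρ = ∫ ω, T β ω * udag ω ∂μ := by
    intro β hβ
    have h1 : ∫ x, β x * Y x ∂ρ = ∫ x, β x * F udag x ∂ρ := by
      refine integral_congr_ae ?_
      filter_upwards [hudag_feas] with x hx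
      rw [hx]
    rw [h1]
    have h2 : ∀ x, β x * F udag x = ∫ ω, β x * (φ ω x * udag ω) ∂μ := by
      intro x; rw [hF]; exact (integral_const_mul _ _).symm
    have hprod : Integrable
        (Function.uncurry fun x ω => β x * (φ ω x * udag ω)) (ρ.prod μ) := by
      have hmajor : Integrable
          (fun z : EuclideanSpace ℝ (Fin d) × Ω => (Φ z.1 * |β z.1|) * |udag z.2|)
          (ρ.prod μ) :=
        (l2_mul_integrable hΦmem (habs β hβ)).mul_prod hudag_int.abs
      refine hmajor.mono' ?_ ?_
      · have hβm : AEStronglyMeasurable (fun z : EuclideanSpace ℝ (Fin d) × Ω => β z.1)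
            (ρ.prod μ) := hβ.1.comp_fst
        have hum : AEStronglyMeasurable (fun z : EuclideanSpace ℝ (Fin d) × Ω => udag z.2)
            (ρ.prod μ) := hudag_int.1.comp_snd
        have hφm : AEStronglyMeasurable (fun z : EuclideanSpace ℝ (Fin d) × Ω => φ z.2 z.1)
            (ρ.prod μ) := (hφ_meas.comp measurable_swap).aestronglyMeasurable
        exact hβm.mul (hφm.mul hum)
      · have hl : ∀ᵐ z : EuclideanSpace ℝ (Fin d) × Ω ∂(ρ.prod μ), ∀ ω, |φ ω z.1| ≤ Φ z.1 :=
          (MeasureTheory.Measure.quasiMeasurePreserving_fst).tendsto_ae.eventually hφle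
        filter_upwards [hl] with z hz
        have : |β z.1 * (φ z.2 z.1 * udag z.2)| = |β z.1| * (|φ z.2 z.1| * |udag z.2|) := by
          rw [abs_mul, abs_mul]
        rw [Real.norm_eq_abs, Function.uncurry_apply_pair] at *
        rw [this]
        have h3 := hz z.2
        nlinarith [abs_nonneg (β z.1), abs_nonneg (udag z.2), abs_nonneg (φ z.2 z.1),
          hΦ0 z.1, mul_le_mul_of_nonneg_right (h3) (abs_nonneg (udag z.2))]
    calc ∫ x, β x * F udag x ∂ρ = ∫ x, ∫ ω, β x * (φ ω x * udag ω) ∂μ ∂ρ :=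
          integral_congr_ae (ae_of_all _ fun x => h2 x)
    _ = ∫ ω, ∫ x, β x * (φ ω x * udag ω) ∂ρ ∂μ := integral_integral_swap hprod
    _ = ∫ ω, T β ω * udag ω ∂μ := by
          refine integral_congr_ae (ae_of_all _ fun ω => ?_)
          show (∫ x, β x * (φ ω x * udag ω) ∂ρ) = T β ω * udag ω
          rw [hT, show (fun x => β x * (φ ω x * udag ω))
              = fun x => (φ ω x * β x) * udag ω from funext fun x => by ring,
            integral_mul_const]
  -- integrability of f ∘ udag
  have hfud_int : Integrable (fun ω => f (udag ω)) μ := by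
    have hm : AEStronglyMeasurable (fun ω => f (udag ω)) μ :=
      hfc.comp_aestronglyMeasurable hudag_int.1
    have hdom : Integrable (fun ω => f 0 + |T αdag ω * udag ω|) μ :=
      (integrable_const (f 0)).add (hTudag_int αdag hαdag_mem).abs
    refine hdom.mono' hm ?_
    filter_upwards [hαdag_src] with ω hω
    have h1 := hω 0
    have h2 : T αdag ω * (0 - udag ω) = -(T αdag ω * udag ω) := by ring
    rw [Real.norm_eq_abs, abs_of_nonneg (hf_nonneg _)]
    have h3 := le_abs_self (T αdag ω * udag ω)
    linarith
  set V : ℝ := ∫ ω, f (udag ω) ∂μ with hV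
  -- weak duality
  have hDual_le : ∀ (β : EuclideanSpace ℝ (Fin d) → ℝ), MemLp β 2 ρ →
      -(∫ ω, fs (T β ω) ∂μ) + ∫ x, β x * Y x ∂ρ ≤ V := by
    intro β hβ
    rw [hkey β hβ]
    have h1 : -(∫ ω, fs (T β ω) ∂μ) + ∫ ω, T β ω * udag ω ∂μ
        = ∫ ω, (T β ω * udag ω - fs (T β ω)) ∂μ := by
      rw [integral_sub (hTudag_int β hβ) (hfsT_int β hβ)]; ring
    rw [h1]
    refine integral_mono_ae ((hTudag_int β hβ).sub (hfsT_int β hβ)) hfud_int ?_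
    refine ae_of_all _ fun ω => ?_
    show T β ω * udag ω - fs (T β ω) ≤ f (udag ω)
    have := young (T β ω) (udag ω)
    linarith
  -- strong duality at αdag
  have hDual_eq : -(∫ ω, fs (T αdag ω) ∂μ) + ∫ x, αdag x * Y x ∂ρ = V := by
    rw [hkey αdag hαdag_mem]
    have h1 : -(∫ ω, fs (T αdag ω) ∂μ) + ∫ ω, T αdag ω * udag ω ∂μ
        = ∫ ω, (T αdag ω * udag ω - fs (T αdag ω)) ∂μ := by
      rw [integral_sub (hTudag_int αdag hαdag_mem) (hfsT_int αdag hαdag_mem)]; ring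
    rw [h1]
    refine integral_congr_ae ?_
    filter_upwards [hαdag_src] with ω hω
    show T αdag ω * udag ω - fs (T αdag ω) = f (udag ω)
    have := hfs_val (T αdag ω) (udag ω) hω
    linarith
  -- equality case gives the source condition
  have hEqCase : ∀ (β : EuclideanSpace ℝ (Fin d) → ℝ), MemLp β 2 ρ →
      V ≤ -(∫ ω, fs (T β ω) ∂μ) + ∫ x, β x * Y x ∂ρ →
      (∀ᵐ ω ∂μ, ∀ t : ℝ, f (udag ω) + T β ω * (t - udag ω) ≤ f t) := by
    intro β hβ hge
    have hint : Integrable (fun ω => f (udag ω) + fs (T β ω) - T β ω * udag ω) μ :=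
      (hfud_int.add (hfsT_int β hβ)).sub (hTudag_int β hβ)
    have h0 : ∀ ω, 0 ≤ f (udag ω) + fs (T β ω) - T β ω * udag ω := fun ω => by
      have := young (T β ω) (udag ω); linarith
    have hi0 : ∫ ω, (f (udag ω) + fs (T β ω) - T β ω * udag ω) ∂μ ≤ 0 := by
      have e2 := integral_add hfud_int (hfsT_int β hβ)
      have e1 := integral_sub (hfud_int.add (hfsT_int β hβ)) (hTudag_int β hβ)
      simp only [Pi.add_apply] at e1 e2
      rw [e1, e2]
      rw [hkey β hβ] at hge
      linarith
    have hIeq : ∫ ω, (f (udag ω) + fs (T β ω) - T β ω * udag ω) ∂μ = 0 :=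
      le_antisymm hi0 (integral_nonneg h0)
    have hae := (integral_eq_zero_iff_of_nonneg_ae (ae_of_all _ h0) hint).1 hIeq
    filter_upwards [hae] with ω hω
    refine hfs_sub (T β ω) (udag ω) ?_
    have h4 : f (udag ω) + fs (T β ω) - T β ω * udag ω = 0 := hω
    linarith
  -- lift everything to L²(ρ)
  set Yl : Lp ℝ 2 ρ := hY.toLp Y with hYl
  set ad : Lp ℝ 2 ρ := hαdag_mem.toLp αdag with had
  set DD : Lp ℝ 2 ρ → ℝ :=
    fun x => -(∫ ω, fs (T (⇑x) ω) ∂μ) + ∫ z, x z * Y z ∂ρ with hDDdef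
  have hDD_eq : ∀ (β : EuclideanSpace ℝ (Fin d) → ℝ) (hβ : MemLp β 2 ρ),
      DD (hβ.toLp β) = -(∫ ω, fs (T β ω) ∂μ) + ∫ z, β z * Y z ∂ρ := by
    intro β hβ
    have h1 : T (⇑(hβ.toLp β)) = T β := funext fun ω => hT_congr _ _ hβ.coeFn_toLp ω
    have h2 : ∫ z, (hβ.toLp β) z * Y z ∂ρ = ∫ z, β z * Y z ∂ρ := by
      refine integral_congr_ae ?_
      filter_upwards [hβ.coeFn_toLp] with z hz
      rw [hz]
    simp only [hDDdef, h1, h2]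
  have hnorm_sq : ∀ x : Lp ℝ 2 ρ, ‖x‖^2 = ∫ z, (x z)^2 ∂ρ := by
    intro x
    have := norm_toLp_sq_eq (Lp.memLp x)
    rwa [Lp.toLp_coeFn x (Lp.memLp x)] at this
  have hDD_coe : ∀ x : Lp ℝ 2 ρ, DD x = -(∫ ω, fs (T (⇑x) ω) ∂μ) + ∫ z, x z * Y z ∂ρ :=
    fun x => rfl
  -- DD maximized at ad
  have hmax : ∀ x : Lp ℝ 2 ρ, DD x ≤ DD ad := by
    intro x
    have h1 : DD x ≤ V := hDual_le (⇑x) (Lp.memLp x)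
    have h2 : DD ad = V := by rw [had, hDD_eq αdag hαdag_mem]; exact hDual_eq
    linarith
  have hadV : DD ad = V := by rw [had, hDD_eq αdag hαdag_mem]; exact hDual_eq
  -- minimal norm property
  have hnormmin : ∀ x : Lp ℝ 2 ρ, DD ad ≤ DD x → ‖ad‖ ≤ ‖x‖ := by
    intro x hx
    rw [hadV] at hx
    have hsrc := hEqCase (⇑x) (Lp.memLp x) hx
    have hle := hαdag_min (⇑x) (Lp.memLp x) hsrc
    have e1 : ‖ad‖^2 = ∫ z, (αdag z)^2 ∂ρ := by rw [had]; exact norm_toLp_sq_eq hαdag_mem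
    have e2 : ‖x‖^2 = ∫ z, (x z)^2 ∂ρ := hnorm_sq x
    nlinarith [norm_nonneg ad, norm_nonneg x]
  -- midpoint concavity
  have hfsmid : ∀ a b : ℝ, fs ((a + b)/2) ≤ (fs a + fs b)/2 := by
    intro a b
    have h := (fs_convex f fs hf_nonneg hf_super hfs).2 (Set.mem_univ a) (Set.mem_univ b)
      (by norm_num : (0:ℝ) ≤ 1/2) (by norm_num : (0:ℝ) ≤ 1/2) (by norm_num)
    simp only [smul_eq_mul] at h
    have h2 : (a + b)/2 = 1/2 * a + 1/2 * b := by ring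
    rw [h2]
    linarith
  have hmid : ∀ x y : Lp ℝ 2 ρ, DD x + DD y ≤ 2 * DD ((1/2 : ℝ) • (x + y)) := by
    intro x y
    set g : EuclideanSpace ℝ (Fin d) → ℝ := ⇑x with hg
    set h : EuclideanSpace ℝ (Fin d) → ℝ := ⇑y with hh
    have hgm : MemLp g 2 ρ := Lp.memLp x
    have hhm : MemLp h 2 ρ := Lp.memLp y
    set m : EuclideanSpace ℝ (Fin d) → ℝ := fun z => (g z + h z)/2 with hm
    have hm_mem : MemLp m 2 ρ := by
      have h1 : MemLp (fun z => (1/2 : ℝ) * (g z + h z)) 2 ρ := (hgm.add hhm).const_mul _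
      have h2 : m = fun z => (1/2 : ℝ) * (g z + h z) := funext fun z => by rw [hm]; ring
      rw [h2]; exact h1
    have hae : ⇑((1/2 : ℝ) • (x + y)) =ᵐ[ρ] m := by
      filter_upwards [Lp.coeFn_smul ((1/2 : ℝ)) (x + y), Lp.coeFn_add x y] with z h1 h2
      rw [hm, h1]
      simp only [Pi.smul_apply, smul_eq_mul]
      rw [h2]
      simp only [Pi.add_apply]
      ring
    have hDDmid : DD ((1/2 : ℝ) • (x + y)) = -(∫ ω, fs (T m ω) ∂μ) + ∫ z, m z * Y z ∂ρ := by
      rw [hDD_coe]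
      have h1 : T (⇑((1/2 : ℝ) • (x + y))) = T m := funext fun ω => hT_congr _ _ hae ω
      have h2 : ∫ z, ((1/2 : ℝ) • (x + y)) z * Y z ∂ρ = ∫ z, m z * Y z ∂ρ := by
        refine integral_congr_ae ?_
        filter_upwards [hae] with z hz
        rw [hz]
      rw [h1, h2]
    rw [hDDmid]
    -- fs term
    have hfsle : ∫ ω, fs (T m ω) ∂μ
        ≤ ((∫ ω, fs (T g ω) ∂μ) + ∫ ω, fs (T h ω) ∂μ)/2 := by
      have hint2 : Integrable (fun ω => (fs (T g ω) + fs (T h ω))/2) μ :=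
        ((hfsT_int g hgm).add (hfsT_int h hhm)).div_const 2
      have h3 : ∫ ω, (fs (T g ω) + fs (T h ω))/2 ∂μ
          = ((∫ ω, fs (T g ω) ∂μ) + ∫ ω, fs (T h ω) ∂μ)/2 := by
        rw [integral_div, integral_add (hfsT_int g hgm) (hfsT_int h hhm)]
      rw [← h3]
      refine integral_mono_ae (hfsT_int m hm_mem) hint2 (ae_of_all _ fun ω => ?_)
      show fs (T m ω) ≤ (fs (T g ω) + fs (T h ω))/2
      rw [hT_mid g h hgm hhm ω]
      exact hfsmid _ _
    -- linear term
    have hlin : ∫ z, m z * Y z ∂ρ = ((∫ z, g z * Y z ∂ρ) + ∫ z, h z * Y z ∂ρ)/2 := by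
      rw [← integral_add (l2_mul_integrable hgm hY) (l2_mul_integrable hhm hY), ← integral_div]
      refine integral_congr_ae (ae_of_all _ fun z => ?_)
      show m z * Y z = (g z * Y z + h z * Y z)/2
      rw [hm]; ring
    rw [hlin]
    have hx1 : DD x = -(∫ ω, fs (T g ω) ∂μ) + ∫ z, g z * Y z ∂ρ := rfl
    have hy1 : DD y = -(∫ ω, fs (T h ω) ∂μ) + ∫ z, h z * Y z ∂ρ := rfl
    rw [hx1, hy1]
    linarith
  -- T bound in terms of Lp norm
  have hT_bd' : ∀ (x : Lp ℝ 2 ρ) (ω : Ω), |T (⇑x) ω| ≤ CΦ * ‖x‖ := by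
    intro x ω
    have h1 := hT_bd (⇑x) (Lp.memLp x) ω
    have h2 : Real.sqrt (∫ z, (x z)^2 ∂ρ) = ‖x‖ := by
      rw [← hnorm_sq x, Real.sqrt_sq (norm_nonneg _)]
    rwa [h2] at h1
  -- sequential continuity of DD on the ball
  have hDcont : ∀ (u : ℕ → Lp ℝ 2 ρ) (y : Lp ℝ 2 ρ), (∀ n, ‖u n‖ ≤ ‖ad‖) →
      Tendsto u atTop (𝓝 y) → Tendsto (fun n => DD (u n)) atTop (𝓝 (DD y)) := by
    intro u y hub huy
    have hyb : ‖y‖ ≤ ‖ad‖ := by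
      have := huy.norm
      exact le_of_tendsto' this hub
    -- linear part via inner products
    have hip : ∀ x : Lp ℝ 2 ρ, ∫ z, x z * Y z ∂ρ = (inner ℝ x Yl : ℝ) := by
      intro x
      rw [hYl, ← inner_toLp_eq (Lp.memLp x) hY, Lp.toLp_coeFn x (Lp.memLp x)]
    have hlin : Tendsto (fun n => ∫ z, (u n) z * Y z ∂ρ) atTop (𝓝 (∫ z, y z * Y z ∂ρ)) := by
      simp only [hip]
      exact huy.inner tendsto_const_nhds
    -- fs part via dominated convergence
    set M : ℝ := CΦ * ‖ad‖ with hMdef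
    have hM0 : 0 ≤ M := mul_nonneg hCΦ0 (norm_nonneg _)
    obtain ⟨Bd, hBd⟩ := (isCompact_Icc (a := -M) (b := M)).exists_bound_of_continuousOn
      hfs_ct.continuousOn
    have hfspart : Tendsto (fun n => ∫ ω, fs (T (⇑(u n)) ω) ∂μ) atTop
        (𝓝 (∫ ω, fs (T (⇑y) ω) ∂μ)) := by
      refine tendsto_integral_of_dominated_convergence (fun _ => Bd)
        (fun n => hfs_ct.comp_aestronglyMeasurable (hT_meas _ (Lp.memLp (u n))))
        (integrable_const Bd) (fun n => ae_of_all _ fun ω => ?_) (ae_of_all _ fun ω => ?_)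
      · have h1 := hT_bd' (u n) ω
        have h2 : |T (⇑(u n)) ω| ≤ M := by
          refine h1.trans ?_
          exact mul_le_mul_of_nonneg_left (hub n) hCΦ0
        have h3 := abs_le.1 h2
        simpa using hBd _ (Set.mem_Icc.2 ⟨h3.1, h3.2⟩)
      · -- pointwise convergence
        have hTten : Tendsto (fun n => T (⇑(u n)) ω) atTop (𝓝 (T (⇑y) ω)) := by
          rw [tendsto_iff_norm_sub_tendsto_zero]
          have hbnd : ∀ n, ‖T (⇑(u n)) ω - T (⇑y) ω‖ ≤ CΦ * ‖u n - y‖ := by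
            intro n
            have e1 : T (⇑(u n)) ω - T (⇑y) ω = T (fun z => (u n) z - y z) ω :=
              (hT_sub (⇑(u n)) (⇑y) (Lp.memLp (u n)) (Lp.memLp y) ω).symm
            have e2 : T (fun z => (u n) z - y z) ω = T (⇑(u n - y)) ω := by
              refine (hT_congr _ _ ?_ ω).symm
              filter_upwards [Lp.coeFn_sub (u n) y] with z hz
              rw [hz]
              simp
            rw [Real.norm_eq_abs, e1, e2]
            exact hT_bd' (u n - y) ω
          have hto0 : Tendsto (fun n => CΦ * ‖u n - y‖) atTop (𝓝 0) := by
            have h4 : Tendsto (fun n => ‖u n - y‖) atTop (𝓝 0) := by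
              rw [← tendsto_iff_norm_sub_tendsto_zero]
              exact huy
            simpa using h4.const_mul CΦ
          exact squeeze_zero (fun n => norm_nonneg _) hbnd hto0
        exact (hfs_ct.tendsto _).comp hTten
    have := (hfspart.neg).add hlin
    simpa only [hDD_coe] using this
  -- the regularized maximizers, as Lp elements
  set Bmap : ℝ → Lp ℝ 2 ρ := fun l => if hl : 0 < l then ((hA l hl).1).toLp (A l) else 0
    with hBmap
  have hBl : ∀ l (hl : 0 < l), Bmap l = ((hA l hl).1).toLp (A l) := by
    intro l hl
    rw [hBmap]
    simp [hl]
  have hopt : ∀ l : ℝ, 0 < l → ∀ x : Lp ℝ 2 ρ,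
      DD x - l/2 * ‖x‖^2 ≤ DD (Bmap l) - l/2 * ‖Bmap l‖^2 := by
    intro l hl x
    rw [hBl l hl, hDD_eq (A l) (hA l hl).1, norm_toLp_sq_eq (hA l hl).1]
    have h2 := (hA l hl).2 (⇑x) (Lp.memLp x)
    rw [hDD_coe, hnorm_sq]
    linarith
  obtain ⟨P1, P2⟩ := hilbert_tikhonov DD ad Bmap hmid hmax hnormmin hDcont hopt
  constructor
  · intro l hl
    have h1 := P1 l hl
    rw [hBl l hl, norm_toLp_sq_eq (hA l hl).1, had, norm_toLp_sq_eq hαdag_mem] at h1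
    exact h1
  · refine Tendsto.congr' ?_ P2
    filter_upwards [self_mem_nhdsWithin] with l hl
    have hl' : (0:ℝ) < l := hl
    have e1 : Bmap l - ad = (((hA l hl').1).sub hαdag_mem).toLp (A l - αdag) := by
      rw [hBl l hl', had, MemLp.toLp_sub]
    rw [e1, norm_toLp_sq_eq]
    refine integral_congr_ae (ae_of_all _ fun z => ?_)
    simp [Pi.sub_apply]
end
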